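/- Let R be a ring and m a two-sided ideal such that R is m-adically complete and R/m is left artinian. Then R is semiperfect, i.e., R/rad(R) is semisimple and idempotents lift modulo rad(R). -/

import Mathlib

variable {R : Type*} [Ring R]

/-- The `n`-th power of a (two-sided) ideal of a possibly noncommutative ring. -/
def idealPow (m : Ideal R) : ℕ → Ideal R
  | 0 => ⊤
  | n + 1 => Ideal.span {x | ∃ a ∈ m, ∃ b ∈ idealPow m n, x = a * b}

/-- `R` is `m`-adically complete: `R → lim R/mⁱ` is bijective. -/
def IsAdicCompleteRing (m : Ideal R) : Prop :=
  (∀ x : R, (∀ i, x ∈ idealPow m i) → x = 0) ∧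
  (∀ a : ℕ → R, (∀ i, a (i + 1) - a i ∈ idealPow m i) →
    ∃ x : R, ∀ i, x - a i ∈ idealPow m i)

/-- The Jacobson radical of `R`. -/
noncomputable def radR (R : Type*) [Ring R] : Ideal R := Ideal.jacobson (⊥ : Ideal R)

/-- `R` is semiperfect: `R / rad R` is a semisimple ring and idempotents lift modulo `rad R`. -/
def IsSemiperfectRing (R : Type*) [Ring R] : Prop :=
  IsSemisimpleModule R (R ⧸ radR R) ∧
  ∀ x : R, x * x - x ∈ radR R → ∃ e : R, IsIdempotentElem e ∧ e - x ∈ radR R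

namespace SPaux


lemma mem_pow_succ {m : Ideal R} {a b : R} (ha : a ∈ m) {n : ℕ} (hb : b ∈ idealPow m n) :
    a * b ∈ idealPow m (n + 1) :=
  Ideal.subset_span ⟨a, ha, b, hb, rfl⟩

lemma pow_succ_le {m : Ideal R} (htw : ∀ a ∈ m, ∀ r : R, a * r ∈ m) (n : ℕ) :
    idealPow m (n + 1) ≤ m := by
  apply Ideal.span_le.mpr
  rintro x ⟨a, ha, b, hb, rfl⟩
  exact htw a ha b

lemma pow_antitone_succ (m : Ideal R) : ∀ n : ℕ, idealPow m (n + 1) ≤ idealPow m n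
  | 0 => le_top
  | n + 1 => by
    apply Ideal.span_le.mpr
    rintro x ⟨a, ha, b, hb, rfl⟩
    exact mem_pow_succ ha (pow_antitone_succ m n hb)

lemma pow_antitone (m : Ideal R) {k l : ℕ} (h : k ≤ l) : idealPow m l ≤ idealPow m k := by
  induction l with
  | zero => simp_all
  | succ n ih =>
    rcases Nat.eq_or_lt_of_le h with rfl | h'
    · exact le_rfl
    · exact (pow_antitone_succ m n).trans (ih (Nat.lt_succ_iff.mp h'))

lemma pow_mul_right {m : Ideal R} :
    ∀ n : ℕ, ∀ x ∈ idealPow m n, ∀ r : R, x * r ∈ idealPow m n := by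
  intro n
  induction n with
  | zero => exact fun x _ r => trivial
  | succ n ih =>
    intro x hx r
    have : idealPow m (n + 1) ≤ Submodule.comap
        (DistribMulAction.toLinearMap R (S := Rᵐᵒᵖ) R (.op r)) (idealPow m (n + 1)) := by
      apply Ideal.span_le.mpr
      rintro y ⟨a, ha, b, hb, rfl⟩
      have : (a * b) * r = a * (b * r) := mul_assoc _ _ _
      exact (show (a * b) * r ∈ idealPow m (n + 1) by rw [this]; exact mem_pow_succ ha (ih b hb r))
    exact this hx

lemma pow_mem_pow {m : Ideal R} {a : R} (ha : a ∈ m) : ∀ n : ℕ, a ^ n ∈ idealPow m n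
  | 0 => trivial
  | n + 1 => by
    rw [pow_succ']
    exact mem_pow_succ ha (pow_mem_pow ha n)


lemma one_sub_unit {m : Ideal R} (hc : IsAdicCompleteRing m) {a : R} (ha : a ∈ m) :
    ∃ u : R, u * (1 - a) = 1 ∧ (1 - a) * u = 1 := by
  set s : ℕ → R := fun n => ∑ k ∈ Finset.range n, a ^ k with hs_def
  have hstep : ∀ i, s (i + 1) - s i ∈ idealPow m i := by
    intro i
    have h1 : s (i + 1) - s i = a ^ i := by
      simp [hs_def, Finset.sum_range_succ]
    rw [h1]
    exact pow_mem_pow ha i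
  obtain ⟨x, hx⟩ := hc.2 s hstep
  have key : ∀ i, (1 - a) * s i = 1 - a ^ i := by
    intro i
    induction i with
    | zero => simp [hs_def]
    | succ i ih =>
      have h1 : s (i + 1) = s i + a ^ i := by simp [hs_def, Finset.sum_range_succ]
      rw [h1, mul_add, ih, sub_mul, one_mul, pow_succ']
      abel
  have key' : ∀ i, s i * (1 - a) = 1 - a ^ i := by
    intro i
    induction i with
    | zero => simp [hs_def]
    | succ i ih =>
      have h1 : s (i + 1) = s i + a ^ i := by simp [hs_def, Finset.sum_range_succ]
      rw [h1, add_mul, ih, mul_sub, mul_one, pow_succ]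
      abel
  refine ⟨x, ?_, ?_⟩
  · have h0 : ∀ i, x * (1 - a) - 1 ∈ idealPow m i := by
      intro i
      have e1 : x * (1 - a) - 1 = (x - s i) * (1 - a) - a ^ i := by
        rw [sub_mul, key' i]; abel
      rw [e1]
      exact Submodule.sub_mem _ (pow_mul_right i _ (hx i) _) (pow_mem_pow ha i)
    exact sub_eq_zero.mp (hc.1 _ h0)
  · have h0 : ∀ i, (1 - a) * x - 1 ∈ idealPow m i := by
      intro i
      have e1 : (1 - a) * x - 1 = (1 - a) * (x - s i) - a ^ i := by
        rw [mul_sub, key i]; abel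
      rw [e1]
      exact Submodule.sub_mem _ (Ideal.mul_mem_left _ _ (hx i)) (pow_mem_pow ha i)
    exact sub_eq_zero.mp (hc.1 _ h0)


lemma rad_mul_right {x : R} (hx : x ∈ radR R) (r : R) : x * r ∈ radR R :=
  show x * r ∈ Ideal.jacobson (⊥ : Ideal R) from Ideal.mul_mem_right r _ hx

lemma rad_left_inv {a : R} (ha : a ∈ radR R) : ∃ u : R, u * (1 - a) = 1 := by
  obtain ⟨z, hz⟩ := Ideal.mem_jacobson_iff.mp ha (-1)
  rw [Ideal.mem_bot] at hz
  refine ⟨z, ?_⟩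
  have : z * (1 - a) - 1 = z * (-1) * a + z - 1 := by noncomm_ring
  have h2 : z * (1 - a) - 1 = 0 := by rw [this, hz]
  exact sub_eq_zero.mp h2

lemma mem_rad_of_forall_left_inv {x : R}
    (h : ∀ y : R, ∃ z : R, z * (y * x + 1) = 1) : x ∈ radR R := by
  rw [radR, Ideal.mem_jacobson_iff]
  intro y
  obtain ⟨z, hz⟩ := h y
  refine ⟨z, ?_⟩
  rw [Ideal.mem_bot]
  have : z * y * x + z - 1 = z * (y * x + 1) - 1 := by noncomm_ring
  rw [this, hz, sub_self]


lemma m_le_rad {m : Ideal R} (htw : ∀ a ∈ m, ∀ r : R, a * r ∈ m)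
    (hc : IsAdicCompleteRing m) : m ≤ radR R := by
  intro x hx
  apply mem_rad_of_forall_left_inv
  intro y
  obtain ⟨u, hu, -⟩ := one_sub_unit hc (m.neg_mem (Ideal.mul_mem_left m y hx))
  refine ⟨u, ?_⟩
  have h1 : 1 - -(y * x) = y * x + 1 := by noncomm_ring
  rw [← h1]
  exact hu


variable {M : Type*} [AddCommGroup M] [Module R M]

/-- Product of a left ideal and a submodule. -/
def smI (I : Ideal R) (N : Submodule R M) : Submodule R M :=
  Submodule.span R {y | ∃ j ∈ I, ∃ x ∈ N, y = j • x}

lemma smI_le {I : Ideal R} {N : Submodule R M} : smI I N ≤ N := by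
  apply Submodule.span_le.mpr
  rintro y ⟨j, hj, x, hx, rfl⟩
  exact N.smul_mem j hx

lemma mem_smI {I : Ideal R} {N : Submodule R M} {j : R} {x : M} (hj : j ∈ I) (hx : x ∈ N) :
    j • x ∈ smI I N :=
  Submodule.subset_span ⟨j, hj, x, hx, rfl⟩

lemma smI_mono_left {I I' : Ideal R} (h : I ≤ I') (N : Submodule R M) : smI I N ≤ smI I' N :=
  Submodule.span_mono (by rintro y ⟨j, hj, x, hx, rfl⟩; exact ⟨j, h hj, x, hx, rfl⟩)

lemma smI_top (N : Submodule R M) : smI ⊤ N = N := by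
  refine le_antisymm smI_le fun x hx => ?_
  simpa using mem_smI (I := (⊤ : Ideal R)) trivial hx (j := (1 : R))

lemma smI_pow_eq (m : Ideal R) (n : ℕ) : idealPow m (n + 1) = smI m (idealPow m n) := rfl

lemma smI_sup_left (I I' : Ideal R) (N : Submodule R M) :
    smI (I ⊔ I') N = smI I N ⊔ smI I' N := by
  refine le_antisymm ?_ (sup_le (smI_mono_left le_sup_left N) (smI_mono_left le_sup_right N))
  apply Submodule.span_le.mpr
  rintro y ⟨j, hj, x, hx, rfl⟩
  obtain ⟨j₁, h₁, j₂, h₂, rfl⟩ := Submodule.mem_sup.mp hj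
  rw [add_smul]
  exact Submodule.add_mem _ (Submodule.mem_sup_left (mem_smI h₁ hx))
    (Submodule.mem_sup_right (mem_smI h₂ hx))

lemma smI_eq_bot {I : Ideal R} {N : Submodule R M} (h : ∀ j ∈ I, ∀ x ∈ N, j • x = 0) :
    smI I N = ⊥ := by
  refine le_bot_iff.mp (Submodule.span_le.mpr ?_)
  rintro y ⟨j, hj, x, hx, rfl⟩
  simp [h j hj x hx]

lemma smI_smI {I J : Ideal R} (hI : ∀ x ∈ I, ∀ r : R, x * r ∈ I) (N : Submodule R M) :
    smI I (smI J N) = smI (smI I J) N := by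
  refine le_antisymm ?_ ?_
  · apply Submodule.span_le.mpr
    rintro y ⟨i, hi, z, hz, rfl⟩
    induction hz using Submodule.span_induction generalizing i with
    | mem w hw =>
      obtain ⟨j, hj, x, hx, rfl⟩ := hw
      rw [← mul_smul]
      exact mem_smI (mem_smI hi hj) hx
    | zero => simp
    | add u v hu hv ihu ihv =>
      rw [smul_add]; exact Submodule.add_mem _ (ihu i hi) (ihv i hi)
    | smul r u hu ihu =>
      rw [← mul_smul]
      exact ihu (i * r) (hI i hi r)
  · apply Submodule.span_le.mpr
    rintro y ⟨t, ht, x, hx, rfl⟩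
    induction ht using Submodule.span_induction with
    | mem w hw =>
      obtain ⟨i, hi, j, hj, rfl⟩ := hw
      rw [smul_eq_mul, mul_smul]
      exact mem_smI hi (mem_smI hj hx)
    | zero => simp
    | add u v hu hv ihu ihv => rw [add_smul]; exact Submodule.add_mem _ ihu ihv
    | smul r u hu ihu => rw [smul_assoc]; exact Submodule.smul_mem _ _ ihu

lemma smI_pow_pow {J : Ideal R} (hJ : ∀ x ∈ J, ∀ r : R, x * r ∈ J) :
    ∀ a b : ℕ, idealPow J (a + b) = smI (idealPow J a) (idealPow J b)
  | 0, b => by rw [Nat.zero_add, show idealPow J 0 = ⊤ from rfl, smI_top]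
  | a + 1, b => by
    have h1 : a + 1 + b = (a + b) + 1 := by omega
    have hrs : ∀ x ∈ idealPow J a, ∀ r : R, x * r ∈ idealPow J a := by
      cases a with
      | zero => exact fun x _ r => trivial
      | succ a => exact pow_mul_right (a + 1)
    rw [h1, smI_pow_eq, smI_pow_pow hJ a b, smI_smI hJ, ← smI_pow_eq]

lemma map_smI {M₂ : Type*} [AddCommGroup M₂] [Module R M₂] (f : M →ₗ[R] M₂)
    (I : Ideal R) (N : Submodule R M) :
    Submodule.map f (smI I N) = smI I (Submodule.map f N) := by
  rw [smI, Submodule.map_span, smI]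
  congr 1
  ext y
  constructor
  · rintro ⟨z, ⟨j, hj, x, hx, rfl⟩, rfl⟩
    exact ⟨j, hj, f x, ⟨x, hx, rfl⟩, (f.map_smul j x)⟩
  · rintro ⟨j, hj, z, ⟨x, hx, rfl⟩, rfl⟩
    exact ⟨j • x, ⟨j, hj, x, hx, rfl⟩, f.map_smul j x⟩

lemma smI_span_singleton_le {I : Ideal R} (hI : ∀ x ∈ I, ∀ r : R, x * r ∈ I) (x : M) :
    smI I (Submodule.span R {x}) ≤
      Submodule.map (LinearMap.toSpanSingleton R M x) I := by
  apply Submodule.span_le.mpr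
  rintro y ⟨j, hj, z, hz, rfl⟩
  obtain ⟨r, rfl⟩ := Submodule.mem_span_singleton.mp hz
  refine ⟨j * r, hI j hj r, ?_⟩
  simp [LinearMap.toSpanSingleton_apply, mul_smul]


lemma smI_top_right {I : Ideal R} (hI : ∀ x ∈ I, ∀ r : R, x * r ∈ I) :
    smI I (⊤ : Submodule R R) = I := by
  refine le_antisymm ?_ ?_
  · apply Submodule.span_le.mpr
    rintro y ⟨j, hj, x, -, rfl⟩
    simpa [smul_eq_mul] using hI j hj x
  · intro j hj
    simpa [smul_eq_mul] using mem_smI (M := R) hj (Submodule.mem_top (x := (1 : R)))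


lemma rad_pow_le_of_artinian {m : Ideal R} (htw : ∀ a ∈ m, ∀ r : R, a * r ∈ m)
    (hart : IsArtinian R (R ⧸ m)) (hml : m ≤ radR R) :
    ∃ n : ℕ, 1 ≤ n ∧ idealPow (radR R) n ≤ m := by
  set J := radR R with hJdef
  have hJrs : ∀ x ∈ J, ∀ r : R, x * r ∈ J := fun x hx r => rad_mul_right hx r
  set N : ℕ → Submodule R (R ⧸ m) := fun k => Submodule.map m.mkQ (idealPow J k) with hNdef
  have hmono : ∀ {k l : ℕ}, k ≤ l → N l ≤ N k :=
    fun h => Submodule.map_mono (pow_antitone J h)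
  obtain ⟨n₀, hn₀⟩ := IsArtinian.monotone_stabilizes
    (f := ⟨fun k => OrderDual.toDual (N k), fun _ _ hkl => hmono hkl⟩)
  set n := n₀ + 1 with hndef
  have hstab : N (n + n) = N n := by
    have h1 : N n₀ = N n := hn₀ n (by omega)
    have h2 : N n₀ = N (n + n) := hn₀ (n + n) (by omega)
    rw [← h1, ← h2]
  have hsup : idealPow J (n + n) ⊔ m = idealPow J n ⊔ m := by
    have h := congrArg (Submodule.comap m.mkQ) hstab
    rw [hNdef] at h
    simp only [Submodule.comap_map_mkQ] at h
    rw [sup_comm m _, sup_comm m _] at h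
    exact h
  have hmkill : ∀ j ∈ m, ∀ x : R ⧸ m, j • x = 0 := by
    intro j hj x
    obtain ⟨r, rfl⟩ := Submodule.mkQ_surjective m x
    rw [← map_smul]
    rw [Submodule.mkQ_apply, Submodule.Quotient.mk_eq_zero]
    simpa [smul_eq_mul] using htw j hj r
  have hsmm : ∀ K : Submodule R (R ⧸ m), smI m K = ⊥ :=
    fun K => smI_eq_bot (fun j hj x _ => hmkill j hj x)
  set I' : Ideal R := idealPow J n ⊔ m with hI'def
  have hrsn : ∀ x ∈ idealPow J n, ∀ r : R, x * r ∈ idealPow J n := pow_mul_right n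
  have hI'rs : ∀ x ∈ I', ∀ r : R, x * r ∈ I' := by
    intro x hx r
    obtain ⟨x₁, h₁, x₂, h₂, rfl⟩ := Submodule.mem_sup.mp hx
    rw [add_mul]
    exact Submodule.add_mem _ (Submodule.mem_sup_left (hrsn _ h₁ r))
      (Submodule.mem_sup_right (htw _ h₂ r))
  have hsmI' : ∀ K : Submodule R (R ⧸ m), smI I' K = smI (idealPow J n) K := by
    intro K; rw [hI'def, smI_sup_left, hsmm, sup_bot_eq]
  have hIdem : ∀ K : Submodule R (R ⧸ m), smI I' (smI I' K) = smI I' K := by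
    intro K
    rw [hsmI', hsmI', smI_smI hrsn, ← smI_pow_pow hJrs n n]
    have e1 : smI (idealPow J (n + n)) K = smI (idealPow J (n + n) ⊔ m) K := by
      rw [smI_sup_left, hsmm, sup_bot_eq]
    rw [e1, hsup, smI_sup_left, hsmm, sup_bot_eq]
  have htopval : smI I' (⊤ : Submodule R (R ⧸ m)) = N n := by
    rw [hsmI']
    have h2 : (⊤ : Submodule R (R ⧸ m)) = Submodule.map m.mkQ ⊤ := by
      rw [Submodule.map_top, Submodule.range_mkQ]
    rw [h2, ← map_smI, smI_top_right hrsn]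
  have hbot : N n = ⊥ := by
    by_contra hNn
    set F : Set (Submodule R (R ⧸ m)) := {K | smI I' K ≠ ⊥} with hFdef
    have htopF : (⊤ : Submodule R (R ⧸ m)) ∈ F := by
      rw [hFdef, Set.mem_setOf_eq, htopval]; exact hNn
    obtain ⟨K, hKF, hKmin⟩ := IsArtinian.set_has_minimal F ⟨⊤, htopF⟩
    have hfix : smI I' K = K := by
      have h1 : smI I' K ∈ F := by rw [hFdef, Set.mem_setOf_eq, hIdem]; exact hKF
      by_contra hne
      exact hKmin _ h1 (lt_of_le_of_ne smI_le hne)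
    have hex : ∃ x ∈ K, ∃ j ∈ I', j • x ≠ 0 := by
      by_contra hno
      push_neg at hno
      exact hKF (smI_eq_bot (fun j hj x hx => hno x hx j hj))
    obtain ⟨x, hxK, j, hjI, hjx⟩ := hex
    have hspanF : Submodule.span R {x} ∈ F := by
      intro hb
      have hmem : j • x ∈ smI I' (Submodule.span R {x}) :=
        mem_smI hjI (Submodule.mem_span_singleton_self x)
      rw [hb, Submodule.mem_bot] at hmem
      exact hjx hmem
    have hKx : K = Submodule.span R {x} := by
      have h1 : Submodule.span R {x} ≤ K := by rwa [Submodule.span_singleton_le_iff_mem]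
      rcases h1.lt_or_eq with hlt | heq
      · exact absurd hlt (hKmin _ hspanF)
      · exact heq.symm
    have hxmem : x ∈ smI I' (Submodule.span R {x}) := by
      rw [← hKx, hfix]; exact hxK
    obtain ⟨t, htI, htx⟩ := smI_span_singleton_le hI'rs x hxmem
    have hP1 : idealPow J 1 ≤ J := by
      apply Ideal.span_le.mpr
      rintro y ⟨a, ha, b, _, rfl⟩
      exact hJrs a ha b
    have hI'rad : I' ≤ radR R := by
      rw [hI'def, ← hJdef]
      exact sup_le ((pow_antitone J (show 1 ≤ n by omega)).trans hP1) hml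
    obtain ⟨u, hu⟩ := rad_left_inv (hI'rad htI)
    have htx' : t • x = x := htx
    have hx0 : x = 0 := by
      have h1 : (1 - t) • x = 0 := by rw [sub_smul, one_smul, htx']; exact sub_self x
      calc x = (1 : R) • x := (one_smul R x).symm
        _ = (u * (1 - t)) • x := by rw [hu]
        _ = u • ((1 - t) • x) := mul_smul _ _ _
        _ = 0 := by rw [h1, smul_zero]
    exact hjx (by rw [hx0, smul_zero])
  refine ⟨n, by omega, ?_⟩
  intro z hz
  have hz2 : m.mkQ z ∈ N n := Submodule.mem_map_of_mem hz
  rw [hbot, Submodule.mem_bot] at hz2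
  rw [← Submodule.Quotient.mk_eq_zero m]
  exact hz2


lemma quot_rad_artinian {m : Ideal R} (hart : IsArtinian R (R ⧸ m)) (hml : m ≤ radR R) :
    IsArtinian R (R ⧸ radR R) := by
  apply isArtinian_of_surjective (R ⧸ m)
    (Submodule.mapQ m (radR R) LinearMap.id (by simpa using hml))
  intro y
  obtain ⟨r, rfl⟩ := Submodule.mkQ_surjective (radR R) y
  exact ⟨Submodule.Quotient.mk r, by rw [Submodule.mapQ_apply]; rfl⟩

lemma exists_coatom_notMem : ∀ y : R ⧸ radR R, y ≠ 0 →
    ∃ C : Submodule R (R ⧸ radR R), IsCoatom C ∧ y ∉ C := by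
  intro y hy
  obtain ⟨r, rfl⟩ := Submodule.mkQ_surjective (radR R) y
  have hr : r ∉ radR R := fun h => hy (by
    rw [Submodule.mkQ_apply, Submodule.Quotient.mk_eq_zero]; exact h)
  have hex : ∃ M₀ ∈ {J : Ideal R | ⊥ ≤ J ∧ J.IsMaximal}, r ∉ M₀ := by
    by_contra h
    push_neg at h
    exact hr (Submodule.mem_sInf.mpr h)
  obtain ⟨M₀, ⟨-, hmax⟩, hrM⟩ := hex
  have hle : radR R ≤ M₀ := sInf_le ⟨bot_le, hmax⟩
  have h1 : Submodule.comap (radR R).mkQ (Submodule.map (radR R).mkQ M₀) = M₀ := by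
    rw [Submodule.comap_map_mkQ, sup_eq_right.mpr hle]
  refine ⟨Submodule.map (radR R).mkQ M₀, ⟨?_, ?_⟩, ?_⟩
  · intro htop
    apply hmax.1.1
    rw [← h1, htop, Submodule.comap_top]
  · intro B hB
    have h2 : M₀ < Submodule.comap (radR R).mkQ B := by
      rw [← h1]
      refine lt_of_le_of_ne (Submodule.comap_mono hB.le) ?_
      intro he
      apply hB.ne
      have h3 := congrArg (Submodule.map (radR R).mkQ) he
      rwa [Submodule.map_comap_eq_of_surjective (Submodule.mkQ_surjective _),
        Submodule.map_comap_eq_of_surjective (Submodule.mkQ_surjective _)] at h3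
    have h3 : Submodule.comap (radR R).mkQ B = ⊤ := hmax.1.2 _ h2
    have h4 := congrArg (Submodule.map (radR R).mkQ) h3
    rwa [Submodule.map_comap_eq_of_surjective (Submodule.mkQ_surjective _),
      Submodule.map_top, Submodule.range_mkQ] at h4
  · intro hmem
    have : r ∈ Submodule.comap (radR R).mkQ (Submodule.map (radR R).mkQ M₀) := hmem
    rw [h1] at this
    exact hrM this

lemma semisimple_quot_rad {m : Ideal R} (hart : IsArtinian R (R ⧸ m)) (hml : m ≤ radR R) :
    IsSemisimpleModule R (R ⧸ radR R) := by
  classical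
  haveI hart2 : IsArtinian R (R ⧸ radR R) := quot_rad_artinian hart hml
  set F : Set (Submodule R (R ⧸ radR R)) :=
    {K | ∃ s : Finset (Submodule R (R ⧸ radR R)), (∀ C ∈ s, IsCoatom C) ∧ K = s.inf id}
    with hFdef
  have htopF : (⊤ : Submodule R (R ⧸ radR R)) ∈ F := ⟨∅, by simp, by simp⟩
  obtain ⟨K, hKF, hKmin⟩ := IsArtinian.set_has_minimal F ⟨⊤, htopF⟩
  obtain ⟨s, hsco, hKs⟩ := hKF
  have hKbot : K = ⊥ := by
    by_contra hne
    obtain ⟨x, hxK, hx0⟩ := Submodule.ne_bot_iff K |>.mp hne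
    obtain ⟨C, hC, hxC⟩ := exists_coatom_notMem x hx0
    have hKC : K ⊓ C ∈ F := by
      refine ⟨insert C s, ?_, ?_⟩
      · intro D hD
        rcases Finset.mem_insert.mp hD with rfl | hD'
        · exact hC
        · exact hsco D hD'
      · rw [Finset.inf_insert, hKs, id]
        rw [inf_comm]
    have hlt : K ⊓ C < K := by
      refine lt_of_le_of_ne inf_le_left ?_
      intro he
      rw [← he] at hxK
      exact hxC hxK.2
    exact hKmin _ hKC hlt
  rw [hKbot] at hKs
  let g : (R ⧸ radR R) →ₗ[R] ((C : s) → (R ⧸ radR R) ⧸ (C : Submodule R (R ⧸ radR R))) :=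
    LinearMap.pi (fun C => Submodule.mkQ (C : Submodule R (R ⧸ radR R)))
  have hker : LinearMap.ker g = ⊥ := by
    rw [LinearMap.ker_pi]
    simp only [Submodule.ker_mkQ]
    rw [show (⨅ (C : s), (C : Submodule R (R ⧸ radR R))) = s.inf id by
      rw [Finset.inf_eq_iInf, iInf_subtype']; rfl]
    exact hKs.symm
  haveI hsimp : ∀ C : s, IsSimpleModule R ((R ⧸ radR R) ⧸ (C : Submodule R (R ⧸ radR R))) :=
    fun C => (isSimpleModule_iff_isCoatom).mpr (hsco C C.2)
  letI : Module R ((C : s) → (R ⧸ radR R) ⧸ (C : Submodule R (R ⧸ radR R))) := inferInstance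
  haveI hpis : IsSemisimpleModule R ((C : s) → (R ⧸ radR R) ⧸ (C : Submodule R (R ⧸ radR R))) := by
    apply isSemisimpleModule_of_isSemisimpleModule_submodule'
      (p := fun C => LinearMap.range
        (LinearMap.single R (fun C : s => (R ⧸ radR R) ⧸ (C : Submodule R (R ⧸ radR R))) C))
    · intro C
      exact IsSemisimpleModule.range (M := (R ⧸ radR R) ⧸ (C : Submodule R (R ⧸ radR R))) (N := (C : s) → (R ⧸ radR R) ⧸ (C : Submodule R (R ⧸ radR R))) (LinearMap.single R (fun C : s => (R ⧸ radR R) ⧸ (C : Submodule R (R ⧸ radR R))) C)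
    · exact LinearMap.iSup_range_single R _
  have hinj : Function.Injective g := (injective_iff_map_eq_zero g).mpr fun x hx => by
    have : x ∈ LinearMap.ker g := hx
    rwa [hker] at this
  exact IsSemisimpleModule.of_injective (N := R ⧸ radR R) (M := (C : s) → (R ⧸ radR R) ⧸ (C : Submodule R (R ⧸ radR R))) g hinj


/-- Newton iteration for idempotent lifting. -/
def newton (x : R) : ℕ → R
  | 0 => x
  | k + 1 => 3 * (newton x k) ^ 2 - 2 * (newton x k) ^ 3

lemma newton_t_succ (x : R) (k : ℕ) :
    newton x (k+1) ^ 2 - newton x (k+1) =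
      ((4 * (newton x k ^ 2 - newton x k) - 3) * (newton x k ^ 2 - newton x k)) *
        (newton x k ^ 2 - newton x k) := by
  show (3 * (newton x k) ^ 2 - 2 * (newton x k) ^ 3) ^ 2
      - (3 * (newton x k) ^ 2 - 2 * (newton x k) ^ 3) = _
  generalize newton x k = y
  noncomm_ring

lemma newton_diff (x : R) (k : ℕ) :
    newton x (k+1) - newton x k = (1 - 2 * newton x k) * (newton x k ^ 2 - newton x k) := by
  show (3 * (newton x k) ^ 2 - 2 * (newton x k) ^ 3) - newton x k = _
  generalize newton x k = y
  noncomm_ring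

lemma newton_t_rad {x : R} (hx : x ^ 2 - x ∈ radR R) :
    ∀ k, newton x k ^ 2 - newton x k ∈ radR R
  | 0 => hx
  | k + 1 => by
    rw [newton_t_succ]
    exact Ideal.mul_mem_left _ _ (newton_t_rad hx k)

lemma newton_t_factor (x : R) :
    ∀ k, ∃ v : R, newton x k ^ 2 - newton x k = v * (x ^ 2 - x) ^ (k + 1) ∧
      Commute (x ^ 2 - x) v
  | 0 => ⟨1, by show x ^ 2 - x = 1 * (x ^ 2 - x) ^ (0 + 1); simp, Commute.one_right _⟩
  | k + 1 => by
    obtain ⟨v, hv, hc⟩ := newton_t_factor x k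
    set T := x ^ 2 - x with hT
    set t := newton x k ^ 2 - newton x k with ht
    have hcT : Commute T (t) := by rw [hv]; exact hc.mul_right (Commute.pow_right (Commute.refl T) _)
    refine ⟨(4 * t - 3) * (v * v) * T ^ k, ?_, ?_⟩
    · rw [newton_t_succ, ← ht]
      calc ((4 * t - 3) * t) * t = (4 * t - 3) * (t * t) := by rw [mul_assoc]
        _ = (4 * t - 3) * ((v * T ^ (k+1)) * (v * T ^ (k+1))) := by rw [← hv]
        _ = (4 * t - 3) * (v * (T ^ (k+1) * v) * T ^ (k+1)) := by simp only [mul_assoc]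
        _ = (4 * t - 3) * (v * (v * T ^ (k+1)) * T ^ (k+1)) := by
            rw [(hc.pow_left (k+1)).eq]
        _ = (4 * t - 3) * (v * v) * (T ^ (k+1) * T ^ (k+1)) := by simp only [mul_assoc]
        _ = (4 * t - 3) * (v * v) * T ^ (k + 1 + (k + 1)) := by rw [← pow_add]
        _ = (4 * t - 3) * (v * v) * (T ^ k * T ^ (k + 2)) := by
            have he : k + 1 + (k + 1) = k + (k + 2) := by omega
            rw [he, pow_add]
        _ = (4 * t - 3) * (v * v) * T ^ k * T ^ (k + 2) := by simp only [mul_assoc]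
    · have h4 : Commute T (4 * t - 3) := by
        refine Commute.sub_right (Commute.mul_right ?_ hcT) ?_
        · exact Commute.ofNat_right _ _
        · exact Commute.ofNat_right _ _
      exact (h4.mul_right (hc.mul_right hc)).mul_right (Commute.pow_right (Commute.refl T) _)


lemma lift_idempotent {m : Ideal R} (htw : ∀ a ∈ m, ∀ r : R, a * r ∈ m)
    (hc : IsAdicCompleteRing m) {n : ℕ} (hn1 : 1 ≤ n) (hle : idealPow (radR R) n ≤ m)
    (hml : m ≤ radR R) (x : R) (hx : x * x - x ∈ radR R) :
    ∃ e : R, e * e = e ∧ e - x ∈ radR R := by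
  have hx2 : x ^ 2 - x ∈ radR R := by rw [pow_two]; exact hx
  set K := n - 1 with hK
  have hKn : K + 1 = n := by omega
  -- t K ∈ m
  have htKm : newton x K ^ 2 - newton x K ∈ m := by
    obtain ⟨v, hv, -⟩ := newton_t_factor x K
    rw [hv, hKn]
    exact Ideal.mul_mem_left _ _ (hle (pow_mem_pow hx2 n))
  set a : ℕ → R := fun j => newton x (K + j) with ha
  set s : ℕ → R := fun j => newton x (K + j) ^ 2 - newton x (K + j) with hs
  have hsm : ∀ j, s j ∈ m ∧ s j ∈ idealPow m j := by
    intro j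
    induction j with
    | zero => exact ⟨htKm, trivial⟩
    | succ j ih =>
      have he : K + (j + 1) = (K + j) + 1 := by omega
      have h2 : s (j + 1) = ((4 * s j - 3) * s j) * s j := by
        rw [hs]; simp only; rw [he, newton_t_succ]
      constructor
      · rw [h2]; exact Ideal.mul_mem_left _ _ ih.1
      · rw [h2]; exact mem_pow_succ (Ideal.mul_mem_left _ _ ih.1) ih.2
  have hd : ∀ j, a (j + 1) - a j ∈ idealPow m j := by
    intro j
    have he : K + (j + 1) = (K + j) + 1 := by omega
    have h2 : a (j + 1) - a j = (1 - 2 * a j) * s j := by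
      rw [ha, hs]; simp only; rw [he, newton_diff]
    rw [h2]
    exact Ideal.mul_mem_left _ _ (hsm j).2
  obtain ⟨e, he⟩ := hc.2 a hd
  have hidem : e * e = e := by
    have h0 : ∀ j, e * e - e ∈ idealPow m j := by
      intro j
      have hid : e * e - e = (e - a j) * e + a j * (e - a j) - (e - a j)
          + (a j * a j - a j) := by noncomm_ring
      have haa : a j * a j - a j = s j := by rw [hs, ha]; simp only; rw [pow_two]
      rw [hid, haa]
      refine Submodule.add_mem _ (Submodule.sub_mem _ (Submodule.add_mem _ ?_ ?_) ?_) (hsm j).2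
      · exact pow_mul_right j _ (he j) e
      · exact Ideal.mul_mem_left _ _ (he j)
      · exact he j
    exact sub_eq_zero.mp (hc.1 _ h0)
  have hnx : ∀ k, newton x k - x ∈ radR R := by
    intro k
    induction k with
    | zero =>
      show x - x ∈ radR R
      rw [sub_self]
      exact Submodule.zero_mem _
    | succ k ih =>
      have h2 : newton x (k + 1) - x = (newton x (k + 1) - newton x k) + (newton x k - x) := by
        abel
      rw [h2, newton_diff]
      exact Submodule.add_mem _ (Ideal.mul_mem_left _ _ (newton_t_rad hx2 k)) ih
  refine ⟨e, hidem, ?_⟩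
  have h3 : e - x = (e - a 1) + (a 1 - x) := by abel
  rw [h3]
  have h4 : e - a 1 ∈ m := pow_succ_le htw 0 (he 1)
  exact Submodule.add_mem _ (hml h4) (hnx (K + 1))


end SPaux

/-- If `R` is `m`-adically complete for a two-sided ideal `m` and `R/m` is left artinian, then
`R` is semiperfect. -/
theorem semiperfect_of_complete (m : Ideal R)
    (htwoSided : ∀ a ∈ m, ∀ r : R, a * r ∈ m)
    (hcomplete : IsAdicCompleteRing m)
    (hart : IsArtinian R (R ⧸ m)) :
    IsSemiperfectRing R := by
  have hml : m ≤ radR R := SPaux.m_le_rad htwoSided hcomplete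
  obtain ⟨n, hn1, hle⟩ := SPaux.rad_pow_le_of_artinian htwoSided hart hml
  constructor
  · exact SPaux.semisimple_quot_rad hart hml
  · intro x hx
    obtain ⟨e, he1, he2⟩ := SPaux.lift_idempotent htwoSided hcomplete hn1 hle hml x hx
    exact ⟨e, he1, he2⟩
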